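/- A CSF W is a Random Performance Function if and only if it satisfies e-Continuity, p-Continuity, Monotonicity, Competitiveness, and Co-monotonicity. -/

import Mathlib

open MeasureTheory Set Filter Topology

noncomputable section

/-- A family of performance CDFs `{F_e}` as in Definition 2 (RPF):
each `F e` is a continuous strictly increasing CDF, and for each `x`
the map `e ↦ F e x` is continuous, strictly decreasing on `(0,∞)`,
and tends to `0` as `e → ∞`. -/
def IsCDFfam (F : ℝ → ℝ → ℝ) : Prop :=
  (∀ e ∈ Set.Ioi (0:ℝ), Continuous (F e) ∧ StrictMono (F e) ∧
    Filter.Tendsto (F e) Filter.atBot (nhds 0) ∧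
    Filter.Tendsto (F e) Filter.atTop (nhds 1)) ∧
  (∀ x : ℝ, ContinuousOn (fun e => F e x) (Set.Ioi 0) ∧
    StrictAntiOn (fun e => F e x) (Set.Ioi 0) ∧
    Filter.Tendsto (fun e => F e x) Filter.atTop (nhds 0))

/-- `p ∈ Δ_k`: a Borel measure on `E = (0,∞)` (modeled as a measure on `ℝ`
giving no mass to `(-∞,0]`) with total mass in `(k, 1]`. -/
def MemDelta (k : ℝ) (p : MeasureTheory.Measure ℝ) : Prop :=
  p (Set.Iic 0) = 0 ∧ ENNReal.ofReal k < p Set.univ ∧ p Set.univ ≤ 1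

/-- A contest success function with budget `k`. -/
def IsCSF (k : ℝ) (W : ℝ → MeasureTheory.Measure ℝ → ℝ) : Prop :=
  ∀ p : MeasureTheory.Measure ℝ, MemDelta k p →
    (∀ e ∈ Set.Ioi (0:ℝ), W e p ∈ Set.Icc (0:ℝ) 1) ∧
    Measurable (fun e => W e p) ∧ (∫ e, W e p ∂p) = k

/-- Random Performance Function: `W e p = 1 - F e (s p)` where the cutoff
`s p` solves the market-clearing equation. -/
def IsRPF (k : ℝ) (W : ℝ → MeasureTheory.Measure ℝ → ℝ) : Prop :=
  ∃ F : ℝ → ℝ → ℝ, IsCDFfam F ∧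
    ∀ p : MeasureTheory.Measure ℝ, MemDelta k p → ∃ s : ℝ,
      (∫ e, (1 - F e s) ∂p) = k ∧ ∀ e ∈ Set.Ioi (0:ℝ), W e p = 1 - F e s

/-- Co-monotonicity. -/
def CoMonotone (k : ℝ) (W : ℝ → MeasureTheory.Measure ℝ → ℝ) : Prop :=
  ∀ e ∈ Set.Ioi (0:ℝ), ∀ e' ∈ Set.Ioi (0:ℝ), ∀ p p' : MeasureTheory.Measure ℝ,
    MemDelta k p → MemDelta k p' → W e p' ≤ W e p → W e' p' ≤ W e' p

/-- Monotonicity. -/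
def CSFMonotone (k : ℝ) (W : ℝ → MeasureTheory.Measure ℝ → ℝ) : Prop :=
  ∀ p : MeasureTheory.Measure ℝ, MemDelta k p →
    StrictMonoOn (fun e => W e p) (Set.Ioi 0) ∧
    Filter.Tendsto (fun e => W e p) Filter.atTop (nhds 1)

/-- Competitiveness. -/
def CSFCompetitive (k : ℝ) (W : ℝ → MeasureTheory.Measure ℝ → ℝ) : Prop :=
  ∀ e ∈ Set.Ioi (0:ℝ),
    Filter.Tendsto (fun eb => W e (MeasureTheory.Measure.dirac eb)) Filter.atTop (nhds 0)

/-- The mixture `α p + (1-α) p'`. -/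
def mix (α : ℝ) (p p' : MeasureTheory.Measure ℝ) : MeasureTheory.Measure ℝ :=
  ENNReal.ofReal α • p + ENNReal.ofReal (1 - α) • p'

/-- p-Continuity. -/
def PContinuousCSF (k : ℝ) (W : ℝ → MeasureTheory.Measure ℝ → ℝ) : Prop :=
  ∀ e ∈ Set.Ioi (0:ℝ), ∀ p p' : MeasureTheory.Measure ℝ,
    MemDelta k p → MemDelta k p' →
    ContinuousOn (fun α => W e (mix α p p')) (Set.Icc 0 1)

/-- e-Continuity. -/
def EContinuous (k : ℝ) (W : ℝ → MeasureTheory.Measure ℝ → ℝ) : Prop :=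
  ∀ p : MeasureTheory.Measure ℝ, MemDelta k p →
    ContinuousOn (fun e => W e p) (Set.Ioi 0)

/-- The right-shift `p ∔ a`. -/
def shift (p : MeasureTheory.Measure ℝ) (a : ℝ) : MeasureTheory.Measure ℝ :=
  MeasureTheory.Measure.map (fun x => x + a) p

/-- A single continuous strictly increasing CDF on `ℝ`. -/
def IsCDF (F : ℝ → ℝ) : Prop :=
  Continuous F ∧ StrictMono F ∧
  Filter.Tendsto F Filter.atBot (nhds 0) ∧ Filter.Tendsto F Filter.atTop (nhds 1)

/-- `F` represents `W` as an additive RPF: `W e p = 1 - F (s p - e)`. -/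
def RepresentsA (k : ℝ) (W : ℝ → MeasureTheory.Measure ℝ → ℝ) (F : ℝ → ℝ) : Prop :=
  ∀ p : MeasureTheory.Measure ℝ, MemDelta k p → ∃ s : ℝ,
    (∫ e, (1 - F (s - e)) ∂p) = k ∧ ∀ e ∈ Set.Ioi (0:ℝ), W e p = 1 - F (s - e)

/-- Additive RPF. -/
def IsARPF (k : ℝ) (W : ℝ → MeasureTheory.Measure ℝ → ℝ) : Prop :=
  ∃ F : ℝ → ℝ, IsCDF F ∧ RepresentsA k W F

/-- Invariance to Common Shifts. -/
def InvCommonShifts (k : ℝ) (W : ℝ → MeasureTheory.Measure ℝ → ℝ) : Prop :=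
  ∀ e ∈ Set.Ioi (0:ℝ), ∀ a ∈ Set.Ioi (0:ℝ), ∀ p : MeasureTheory.Measure ℝ,
    MemDelta k p → W e p = W (e + a) (shift p a)

/-- Invariance to p Shifts. -/
def InvPShifts (k : ℝ) (W : ℝ → MeasureTheory.Measure ℝ → ℝ) : Prop :=
  ∀ e ∈ Set.Ioi (0:ℝ), ∀ e' ∈ Set.Ioi (0:ℝ), ∀ a ∈ Set.Ioi (0:ℝ),
    ∀ p p' : MeasureTheory.Measure ℝ, MemDelta k p → MemDelta k p' →
    W e p = W e' p' → W e (shift p a) = W e' (shift p' a)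

/-! ### Auxiliary lemmas for the proof of Theorem 1 -/

section Aux

variable {k : ℝ} {W : ℝ → MeasureTheory.Measure ℝ → ℝ}

/-- Almost every point of a measure in `Δ_k` is positive. -/
lemma aux_ae_Ioi {p : Measure ℝ} (hp0 : p (Set.Iic 0) = 0) :
    ∀ᵐ u ∂p, u ∈ Set.Ioi (0:ℝ) := by
  rw [ae_iff]
  refine measure_mono_null (fun u hu => ?_) hp0
  simpa [Set.mem_Iic] using not_lt.mp (by simpa using hu)

lemma aux_int_congr {p : Measure ℝ} (hp0 : p (Set.Iic 0) = 0) {f g : ℝ → ℝ}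
    (h : ∀ u ∈ Set.Ioi (0:ℝ), f u = g u) :
    ∫ u, f u ∂p = ∫ u, g u ∂p :=
  integral_congr_ae ((aux_ae_Ioi hp0).mono fun u hu => h u hu)

lemma aux_memDelta_dirac (hk1 : k < 1) {b : ℝ} (hb : 0 < b) :
    MemDelta k (Measure.dirac b) := by
  refine ⟨?_, ?_, ?_⟩
  · rw [Measure.dirac_apply]
    exact Set.indicator_of_notMem (by simpa using hb) _
  · simpa using ENNReal.ofReal_lt_one.mpr hk1
  · simp

lemma aux_memDelta_smul_dirac (hk0 : 0 < k) {b c : ℝ} (hb : 0 < b) (hc : k < c)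
    (hc1 : c ≤ 1) : MemDelta k (ENNReal.ofReal c • Measure.dirac b) := by
  refine ⟨?_, ?_, ?_⟩
  · rw [Measure.smul_apply, Measure.dirac_apply, smul_eq_mul,
      Set.indicator_of_notMem (by simpa using hb)]
    simp
  · simp only [Measure.smul_apply, measure_univ, smul_eq_mul, mul_one]
    exact (ENNReal.ofReal_lt_ofReal_iff (hk0.trans hc)).mpr hc
  · simp only [Measure.smul_apply, measure_univ, smul_eq_mul, mul_one]
    exact ENNReal.ofReal_le_one.mpr hc1

lemma aux_mix_zero (p p' : Measure ℝ) : mix 0 p p' = p' := by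
  simp [mix]

lemma aux_mix_one (p p' : Measure ℝ) : mix 1 p p' = p := by
  simp [mix]

lemma aux_memDelta_mix (hk0 : 0 < k) {α : ℝ} (hα : α ∈ Set.Icc (0:ℝ) 1)
    {p p' : Measure ℝ} (hp : MemDelta k p) (hp' : MemDelta k p') :
    MemDelta k (mix α p p') := by
  obtain ⟨hα0, hα1⟩ := hα
  have habm : ∀ s : Set ℝ, (mix α p p') s
      = ENNReal.ofReal α * p s + ENNReal.ofReal (1 - α) * p' s := by
    intro s; simp [mix]
  have hab : ENNReal.ofReal α + ENNReal.ofReal (1 - α) = 1 := by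
    rw [← ENNReal.ofReal_add hα0 (by linarith)]
    norm_num
  refine ⟨?_, ?_, ?_⟩
  · rw [habm, hp.1, hp'.1]; simp
  · rcases eq_or_lt_of_le hα1 with h1 | h1
    · subst h1; rw [aux_mix_one]; exact hp.2.1
    · rw [habm]
      have hb0 : ENNReal.ofReal (1 - α) ≠ 0 := by
        simp [ENNReal.ofReal_eq_zero]; linarith
      calc ENNReal.ofReal k
          = (ENNReal.ofReal α + ENNReal.ofReal (1 - α)) * ENNReal.ofReal k := by
            rw [hab, one_mul]
        _ = ENNReal.ofReal α * ENNReal.ofReal k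
              + ENNReal.ofReal (1 - α) * ENNReal.ofReal k := by rw [add_mul]
        _ < ENNReal.ofReal α * p Set.univ + ENNReal.ofReal (1 - α) * p' Set.univ := by
            refine ENNReal.add_lt_add_of_le_of_lt ?_ ?_ ?_
            · exact ENNReal.mul_ne_top ENNReal.ofReal_ne_top ENNReal.ofReal_ne_top
            · exact mul_le_mul_right hp.2.1.le _
            · exact (ENNReal.mul_lt_mul_iff_right hb0 ENNReal.ofReal_ne_top).mpr hp'.2.1
  · rw [habm]
    calc ENNReal.ofReal α * p Set.univ + ENNReal.ofReal (1 - α) * p' Set.univ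
        ≤ ENNReal.ofReal α * 1 + ENNReal.ofReal (1 - α) * 1 :=
          add_le_add (mul_le_mul_right hp.2.2 _) (mul_le_mul_right hp'.2.2 _)
      _ = 1 := by rw [mul_one, mul_one, hab]

/-- Strict positivity of a monotone CSF. -/
lemma aux_csf_pos (hW : IsCSF k W) (hM : CSFMonotone k W) {p : Measure ℝ}
    (hp : MemDelta k p) {e : ℝ} (he : 0 < e) : 0 < W e p := by
  have h2 : (0:ℝ) < e / 2 := by linarith
  have hlt := (hM p hp).1 (Set.mem_Ioi.mpr h2) (Set.mem_Ioi.mpr he) (by linarith)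
  have h0 := ((hW p hp).1 (e/2) (Set.mem_Ioi.mpr h2)).1
  exact lt_of_le_of_lt h0 hlt

lemma aux_csf_lt_one (hW : IsCSF k W) (hM : CSFMonotone k W) {p : Measure ℝ}
    (hp : MemDelta k p) {e : ℝ} (he : 0 < e) : W e p < 1 := by
  have hlt := (hM p hp).1 (Set.mem_Ioi.mpr he) (Set.mem_Ioi.mpr (by linarith : (0:ℝ) < e + 1))
    (by linarith)
  have h1 := ((hW p hp).1 (e+1) (Set.mem_Ioi.mpr (by linarith))).2
  exact lt_of_lt_of_le hlt h1

/-- Equal at `1` implies equal everywhere (co-monotonicity). -/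
lemma aux_comono_eq (hCo : CoMonotone k W) {p q : Measure ℝ} (hp : MemDelta k p)
    (hq : MemDelta k q) (h : W 1 p = W 1 q) {e : ℝ} (he : 0 < e) :
    W e p = W e q :=
  le_antisymm
    (hCo 1 (Set.mem_Ioi.mpr one_pos) e (Set.mem_Ioi.mpr he) q p hq hp h.le)
    (hCo 1 (Set.mem_Ioi.mpr one_pos) e (Set.mem_Ioi.mpr he) p q hp hq h.ge)

/-- Strict comparison at `1` implies strict comparison everywhere. -/
lemma aux_comono_lt (hCo : CoMonotone k W) {p q : Measure ℝ} (hp : MemDelta k p)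
    (hq : MemDelta k q) (h : W 1 p < W 1 q) {e : ℝ} (he : 0 < e) :
    W e p < W e q := by
  have hle : W e p ≤ W e q :=
    hCo 1 (Set.mem_Ioi.mpr one_pos) e (Set.mem_Ioi.mpr he) q p hq hp h.le
  rcases eq_or_lt_of_le hle with heq | hlt
  · exfalso
    have := hCo e (Set.mem_Ioi.mpr he) 1 (Set.mem_Ioi.mpr one_pos) p q hp hq heq.ge
    exact absurd this (not_le.mpr h)
  · exact hlt

/-- Budget identity at a scaled dirac measure. -/
lemma aux_scaled_dirac_budget (hW : IsCSF k W) (hk0 : 0 < k) {b c : ℝ}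
    (hb : 0 < b) (hc : k < c) (hc1 : c ≤ 1) :
    W b (ENNReal.ofReal c • Measure.dirac b) = k / c := by
  have hmem := aux_memDelta_smul_dirac hk0 hb hc hc1
  have hint := (hW _ hmem).2.2
  rw [integral_smul_measure, integral_dirac, smul_eq_mul,
    ENNReal.toReal_ofReal (by linarith : (0:ℝ) ≤ c)] at hint
  have hc0 : c ≠ 0 := by linarith
  field_simp at hint ⊢
  linarith

section AuxF

variable {k : ℝ} {W : ℝ → MeasureTheory.Measure ℝ → ℝ} {F : ℝ → ℝ → ℝ}

lemma aux_F_nonneg (hF : IsCDFfam F) {e : ℝ} (he : 0 < e) (x : ℝ) : 0 ≤ F e x := by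
  refine le_of_tendsto (hF.1 e he).2.2.1 ?_
  exact Filter.eventually_atBot.mpr ⟨x, fun y hy => (hF.1 e he).2.1.monotone hy⟩

lemma aux_F_le_one (hF : IsCDFfam F) {e : ℝ} (he : 0 < e) (x : ℝ) : F e x ≤ 1 := by
  refine ge_of_tendsto (hF.1 e he).2.2.2 ?_
  exact Filter.eventually_atTop.mpr ⟨x, fun y hy => (hF.1 e he).2.1.monotone hy⟩

lemma aux_integrable (hF : IsCDFfam F) {p : Measure ℝ} (hp : MemDelta k p) (t : ℝ) :
    Integrable (fun u => 1 - F u t) p := by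
  have hfin : IsFiniteMeasure p := ⟨hp.2.2.trans_lt ENNReal.one_lt_top⟩
  have hres : p.restrict (Set.Ioi 0) = p :=
    Measure.restrict_eq_self_of_ae_mem (aux_ae_Ioi hp.1)
  have ham : AEMeasurable (fun u => F u t) p := by
    rw [← hres]
    exact (hF.2 t).1.aemeasurable measurableSet_Ioi
  have haesm : AEStronglyMeasurable (fun u => 1 - F u t) p :=
    aestronglyMeasurable_const.sub ham.aestronglyMeasurable
  refine Integrable.mono' (integrable_const 1) haesm ?_
  refine (aux_ae_Ioi hp.1).mono fun u hu => ?_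
  have h0 := aux_F_nonneg hF hu t
  have h1 := aux_F_le_one hF hu t
  rw [Real.norm_eq_abs, abs_le]
  constructor <;> linarith

lemma aux_G_anti (hF : IsCDFfam F) {p : Measure ℝ} (hp : MemDelta k p) {t t' : ℝ}
    (h : t ≤ t') : ∫ u, (1 - F u t') ∂p ≤ ∫ u, (1 - F u t) ∂p := by
  refine integral_mono_ae (aux_integrable hF hp t') (aux_integrable hF hp t) ?_
  refine (aux_ae_Ioi hp.1).mono fun u hu => ?_
  have := (hF.1 u hu).2.1.monotone h
  simp only
  linarith

lemma aux_G_strictAnti (hk0 : 0 < k) (hF : IsCDFfam F) {p : Measure ℝ}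
    (hp : MemDelta k p) {t t' : ℝ} (h : t < t') :
    ∫ u, (1 - F u t') ∂p < ∫ u, (1 - F u t) ∂p := by
  have hint : Integrable (fun u => (1 - F u t) - (1 - F u t')) p :=
    (aux_integrable hF hp t).sub (aux_integrable hF hp t')
  have hnn : 0 ≤ᵐ[p] fun u => (1 - F u t) - (1 - F u t') := by
    refine (aux_ae_Ioi hp.1).mono fun u hu => ?_
    have := ((hF.1 u hu).2.1 h).le
    simp only [Pi.zero_apply]
    linarith
  have hpos : 0 < ∫ u, ((1 - F u t) - (1 - F u t')) ∂p := by
    rw [integral_pos_iff_support_of_nonneg_ae hnn hint]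
    have hsub : Set.Ioi (0:ℝ) ⊆ Function.support fun u => (1 - F u t) - (1 - F u t') := by
      intro u hu
      have := (hF.1 u hu).2.1 h
      simp only [Function.mem_support]
      intro hcon
      nlinarith
    have huniv : p Set.univ = p (Set.Iic 0) + p (Set.Ioi 0) := by
      rw [← measure_union (Set.Iic_disjoint_Ioi le_rfl) measurableSet_Ioi, Set.Iic_union_Ioi]
    have hIoi : 0 < p (Set.Ioi 0) := by
      have h1 : ENNReal.ofReal k < p (Set.Ioi 0) := by
        have := hp.2.1
        rwa [huniv, hp.1, zero_add] at this
      exact lt_of_le_of_lt zero_le h1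
    exact lt_of_lt_of_le hIoi (measure_mono hsub)
  have heq := integral_sub (aux_integrable hF hp t) (aux_integrable hF hp t')
  rw [heq] at hpos
  linarith

lemma aux_G_mix (hF : IsCDFfam F) {p p' : Measure ℝ} (hp : MemDelta k p)
    (hp' : MemDelta k p') {α : ℝ} (hα : α ∈ Set.Icc (0:ℝ) 1) (t : ℝ) :
    ∫ u, (1 - F u t) ∂(mix α p p')
      = α * ∫ u, (1 - F u t) ∂p + (1 - α) * ∫ u, (1 - F u t) ∂p' := by
  have h1 : Integrable (fun u => 1 - F u t) (ENNReal.ofReal α • p) :=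
    (aux_integrable hF hp t).smul_measure ENNReal.ofReal_ne_top
  have h2 : Integrable (fun u => 1 - F u t) (ENNReal.ofReal (1 - α) • p') :=
    (aux_integrable hF hp' t).smul_measure ENNReal.ofReal_ne_top
  rw [mix, integral_add_measure h1 h2, integral_smul_measure, integral_smul_measure,
    ENNReal.toReal_ofReal hα.1, ENNReal.toReal_ofReal (by linarith [hα.2] : (0:ℝ) ≤ 1 - α),
    smul_eq_mul, smul_eq_mul]

/-- The forward direction of Theorem 1: an RPF satisfies the five properties. -/
lemma aux_forward {k : ℝ} {W : ℝ → MeasureTheory.Measure ℝ → ℝ}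
    (hk : k ∈ Set.Ioo (0:ℝ) 1) (hW : IsCSF k W) (h : IsRPF k W) :
    EContinuous k W ∧ PContinuousCSF k W ∧ CSFMonotone k W ∧
      CSFCompetitive k W ∧ CoMonotone k W := by
  classical
  obtain ⟨F, hF, hRep⟩ := h
  set S : Measure ℝ → ℝ := fun p => if h : MemDelta k p then (hRep p h).choose else 0 with hSdef
  have hS1 : ∀ p, ∀ hp : MemDelta k p, (∫ u, (1 - F u (S p)) ∂p) = k := by
    intro p hp
    simp only [hSdef, dif_pos hp]
    exact (hRep p hp).choose_spec.1
  have hS2 : ∀ p, ∀ _ : MemDelta k p, ∀ e, 0 < e → W e p = 1 - F e (S p) := by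
    intro p hp e he
    simp only [hSdef, dif_pos hp]
    exact (hRep p hp).choose_spec.2 e (Set.mem_Ioi.mpr he)
  have hMono : CSFMonotone k W := by
    intro p hp
    constructor
    · intro a ha b hb hab
      simp only
      rw [hS2 p hp a (Set.mem_Ioi.mp ha), hS2 p hp b (Set.mem_Ioi.mp hb)]
      have := (hF.2 (S p)).2.1 ha hb hab
      simp only at this
      linarith
    · have hev : (fun e => 1 - F e (S p)) =ᶠ[Filter.atTop] fun e => W e p :=
        (Filter.eventually_gt_atTop 0).mono fun e he => (hS2 p hp e he).symm
      have hten : Filter.Tendsto (fun e => 1 - F e (S p)) Filter.atTop (nhds 1) := by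
        simpa using ((hF.2 (S p)).2.2).const_sub 1
      exact hten.congr' hev
  refine ⟨?_, ?_, hMono, ?_, ?_⟩
  · -- e-Continuity
    intro p hp
    exact (continuousOn_const.sub (hF.2 (S p)).1).congr fun e he =>
      hS2 p hp e (Set.mem_Ioi.mp he)
  · -- p-Continuity
    intro e hee p p' hp hp'
    have he : (0:ℝ) < e := Set.mem_Ioi.mp hee
    have hmem : ∀ α ∈ Set.Icc (0:ℝ) 1, MemDelta k (mix α p p') := fun α hα =>
      aux_memDelta_mix hk.1 hα hp hp'
    have hScont : ContinuousOn (fun α => S (mix α p p')) (Set.Icc 0 1) := by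
      intro α₀ hα₀
      have hmemα₀ := hmem α₀ hα₀
      rw [ContinuousWithinAt, tendsto_order]
      constructor
      · intro b hb
        have hklt : k < α₀ * (∫ u, (1 - F u b) ∂p) + (1 - α₀) * ∫ u, (1 - F u b) ∂p' := by
          have h1 := aux_G_strictAnti hk.1 hF hmemα₀ hb
          rw [hS1 _ hmemα₀, aux_G_mix hF hp hp' hα₀ b] at h1
          exact h1
        have hcont : Continuous fun α : ℝ =>
            α * (∫ u, (1 - F u b) ∂p) + (1 - α) * ∫ u, (1 - F u b) ∂p' := by
          fun_prop
        have hev := ((hcont.tendsto α₀).eventually_const_lt hklt).filter_mono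
          (nhdsWithin_le_nhds (s := Set.Icc (0:ℝ) 1))
        filter_upwards [hev, self_mem_nhdsWithin] with α h1 h2
        by_contra hcon
        push_neg at hcon
        have h3 := aux_G_anti hF (hmem α h2) hcon
        rw [hS1 _ (hmem α h2), aux_G_mix hF hp hp' h2 b] at h3
        linarith
      · intro b hb
        have hklt : α₀ * (∫ u, (1 - F u b) ∂p) + (1 - α₀) * (∫ u, (1 - F u b) ∂p') < k := by
          have h1 := aux_G_strictAnti hk.1 hF hmemα₀ hb
          rw [hS1 _ hmemα₀, aux_G_mix hF hp hp' hα₀ b] at h1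
          exact h1
        have hcont : Continuous fun α : ℝ =>
            α * (∫ u, (1 - F u b) ∂p) + (1 - α) * ∫ u, (1 - F u b) ∂p' := by
          fun_prop
        have hev := ((hcont.tendsto α₀).eventually_lt_const hklt).filter_mono
          (nhdsWithin_le_nhds (s := Set.Icc (0:ℝ) 1))
        filter_upwards [hev, self_mem_nhdsWithin] with α h1 h2
        by_contra hcon
        push_neg at hcon
        have h3 := aux_G_anti hF (hmem α h2) hcon
        rw [hS1 _ (hmem α h2), aux_G_mix hF hp hp' h2 b] at h3
        linarith
    have h2 : ContinuousOn (fun α => F e (S (mix α p p'))) (Set.Icc 0 1) :=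
      (hF.1 e he).1.comp_continuousOn hScont
    exact (continuousOn_const.sub h2).congr fun α hα => hS2 _ (hmem α hα) e he
  · -- Competitiveness
    intro e hee
    have he : (0:ℝ) < e := Set.mem_Ioi.mp hee
    have hdm : ∀ b : ℝ, 0 < b → MemDelta k (Measure.dirac b) := fun b hb =>
      aux_memDelta_dirac hk.2 hb
    have key : ∀ b : ℝ, 0 < b → F b (S (Measure.dirac b)) = 1 - k := by
      intro b hb
      have h1 := hS1 _ (hdm b hb)
      rw [integral_dirac] at h1
      linarith
    have hstop : Filter.Tendsto (fun b => S (Measure.dirac b)) Filter.atTop Filter.atTop := by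
      rw [Filter.tendsto_atTop]
      intro M
      filter_upwards [Filter.eventually_gt_atTop 0,
        ((hF.2 M).2.2).eventually_lt_const (by linarith [hk.2] : (0:ℝ) < 1 - k)] with b hb hlt
      by_contra hcon
      push_neg at hcon
      have hmono := (hF.1 b hb).2.1.monotone hcon.le
      rw [key b hb] at hmono
      linarith
    have hcomp : Filter.Tendsto (fun b => F e (S (Measure.dirac b))) Filter.atTop (nhds 1) :=
      ((hF.1 e he).2.2.2).comp hstop
    have hten : Filter.Tendsto (fun b => 1 - F e (S (Measure.dirac b)))
        Filter.atTop (nhds 0) := by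
      simpa using hcomp.const_sub 1
    refine hten.congr' ?_
    filter_upwards [Filter.eventually_gt_atTop 0] with b hb
    exact (hS2 _ (hdm b hb) e he).symm
  · -- Co-monotonicity
    intro e hee e' hee' p p' hp hp' hle
    have he := Set.mem_Ioi.mp hee
    have he' := Set.mem_Ioi.mp hee'
    rw [hS2 p hp e he, hS2 p' hp' e he] at hle
    have hss : S p ≤ S p' := ((hF.1 e he).2.1.le_iff_le).mp (by linarith)
    have := (hF.1 e' he').2.1.monotone hss
    rw [hS2 p hp e' he', hS2 p' hp' e' he']
    linarith

/-- A decreasing homeomorphism-like parametrization `ℝ → (0,1)`. -/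
def auxlf (x : ℝ) : ℝ := 1 / (1 + Real.exp x)

lemma auxlf_mem (x : ℝ) : auxlf x ∈ Set.Ioo (0:ℝ) 1 := by
  have h := Real.exp_pos x
  constructor
  · exact div_pos one_pos (by linarith)
  · rw [auxlf, div_lt_one (by linarith)]
    linarith

lemma auxlf_strictAnti : StrictAnti auxlf := by
  intro x y hxy
  have h1 := Real.exp_pos x
  have h2 := Real.exp_lt_exp.mpr hxy
  exact one_div_lt_one_div_of_lt (by linarith) (by linarith)

lemma auxlf_log {t : ℝ} (ht : t ∈ Set.Ioo (0:ℝ) 1) :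
    auxlf (Real.log ((1 - t) / t)) = t := by
  obtain ⟨ht0, ht1⟩ := ht
  rw [auxlf, Real.exp_log (div_pos (by linarith) ht0)]
  field_simp
  ring

section AuxB

variable {k : ℝ} {W : ℝ → MeasureTheory.Measure ℝ → ℝ}

/-- Values of `W e ·` arbitrarily close to `1`, via scaled diracs. -/
lemma aux_near_one (hk : k ∈ Set.Ioo (0:ℝ) 1) (hW : IsCSF k W) (hM : CSFMonotone k W)
    {e : ℝ} (he : 0 < e) {y : ℝ} (hy : y < 1) :
    ∃ p, MemDelta k p ∧ y < W e p := by
  set z := max y k with hz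
  have hzk : k ≤ z := le_max_right _ _
  have hzy : y ≤ z := le_max_left _ _
  have hz1 : z < 1 := max_lt hy hk.2
  have hz0 : (0:ℝ) < 1 + z := by linarith [hk.1]
  set c := 2 * k / (1 + z) with hc
  have hcgt : k < c := by
    rw [hc, lt_div_iff₀ hz0]
    nlinarith [hk.1]
  have hcle : c ≤ 1 := by
    rw [hc, div_le_one hz0]
    nlinarith [hk.2]
  have hmem := aux_memDelta_smul_dirac hk.1 (half_pos he) hcgt hcle
  refine ⟨_, hmem, ?_⟩
  have hb := aux_scaled_dirac_budget hW hk.1 (half_pos he) hcgt hcle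
  have hk0 : k ≠ 0 := ne_of_gt hk.1
  have hcv : k / c = (1 + z) / 2 := by
    rw [hc, div_div_eq_mul_div, mul_comm 2 k, mul_comm k (1 + z)]
    rw [mul_comm k 2, mul_div_mul_right _ _ hk0]
  have hlt := (hM _ hmem).1 (Set.mem_Ioi.mpr (half_pos he)) (Set.mem_Ioi.mpr he)
    (by linarith)
  simp only at hlt
  rw [hb, hcv] at hlt
  linarith

/-- Values of `W e ·` arbitrarily close to `0`, via far-away diracs. -/
lemma aux_near_zero (hk1 : k < 1) (hC : CSFCompetitive k W) {e : ℝ} (he : 0 < e)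
    {y : ℝ} (hy : 0 < y) : ∃ p, MemDelta k p ∧ W e p < y := by
  have h1 := (hC e (Set.mem_Ioi.mpr he)).eventually_lt_const hy
  obtain ⟨b, hb1, hb2⟩ := (h1.and (Filter.eventually_gt_atTop 0)).exists
  exact ⟨Measure.dirac b, aux_memDelta_dirac hk1 hb2, hb1⟩

/-- Every value in `(0,1)` is attained by `W e ·` on `Δ_k`. -/
lemma aux_exists_value (hk : k ∈ Set.Ioo (0:ℝ) 1) (hW : IsCSF k W)
    (hM : CSFMonotone k W) (hC : CSFCompetitive k W) (hP : PContinuousCSF k W)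
    {e : ℝ} (he : 0 < e) {t : ℝ} (ht : t ∈ Set.Ioo (0:ℝ) 1) :
    ∃ p, MemDelta k p ∧ W e p = t := by
  obtain ⟨pp, hpp, hppv⟩ := aux_near_one hk hW hM he ht.2
  obtain ⟨pm, hpm, hpmv⟩ := aux_near_zero hk.2 hC he ht.1
  have hf : ContinuousOn (fun α => W e (mix α pp pm)) (Set.Icc 0 1) :=
    hP e (Set.mem_Ioi.mpr he) pp pm hpp hpm
  have hivt := intermediate_value_Icc (zero_le_one) hf
  have hmem : t ∈ Set.Icc (W e (mix 0 pp pm)) (W e (mix 1 pp pm)) := by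
    rw [aux_mix_zero, aux_mix_one]
    exact ⟨hpmv.le, hppv.le⟩
  obtain ⟨α, hα, hfα⟩ := hivt hmem
  exact ⟨mix α pp pm, aux_memDelta_mix hk.1 hα hpp hpm, hfα⟩

/-- The backward direction of Theorem 1: the five properties imply the RPF
representation. -/
lemma aux_backward {k : ℝ} {W : ℝ → MeasureTheory.Measure ℝ → ℝ}
    (hk : k ∈ Set.Ioo (0:ℝ) 1) (hW : IsCSF k W) (hE : EContinuous k W)
    (hP : PContinuousCSF k W) (hM : CSFMonotone k W) (hC : CSFCompetitive k W)
    (hCo : CoMonotone k W) : IsRPF k W := by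
  classical
  have hex : ∀ t ∈ Set.Ioo (0:ℝ) 1, ∃ p, MemDelta k p ∧ W 1 p = t := fun t ht =>
    aux_exists_value hk hW hM hC hP one_pos ht
  set pick : ℝ → Measure ℝ := fun t =>
    if h : ∃ p, MemDelta k p ∧ W 1 p = t then h.choose else Measure.dirac 1 with hpickdef
  have hpick : ∀ t ∈ Set.Ioo (0:ℝ) 1, MemDelta k (pick t) ∧ W 1 (pick t) = t := by
    intro t ht
    have h := hex t ht
    simp only [hpickdef, dif_pos h]
    exact h.choose_spec
  refine ⟨fun e x => 1 - W e (pick (auxlf x)), ⟨?_, ?_⟩, ?_⟩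
  · -- conditions in the performance variable `x`, for fixed `e`
    intro e hee
    have he : (0:ℝ) < e := Set.mem_Ioi.mp hee
    set g : ℝ → ℝ := fun x => 1 - W e (pick (auxlf x)) with hgdef
    have hmm : ∀ x : ℝ, MemDelta k (pick (auxlf x)) ∧ W 1 (pick (auxlf x)) = auxlf x :=
      fun x => hpick _ (auxlf_mem x)
    have hg01 : ∀ x, g x ∈ Set.Ioo (0:ℝ) 1 := by
      intro x
      have h1 := aux_csf_lt_one hW hM (hmm x).1 he
      have h2 := aux_csf_pos hW hM (hmm x).1 he
      exact ⟨by simp only [hgdef]; linarith, by simp only [hgdef]; linarith⟩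
    have hgmono : StrictMono g := by
      intro x y hxy
      have h1 : auxlf y < auxlf x := auxlf_strictAnti hxy
      have h2 : W 1 (pick (auxlf y)) < W 1 (pick (auxlf x)) := by
        rw [(hmm y).2, (hmm x).2]; exact h1
      have h3 := aux_comono_lt hCo (hmm y).1 (hmm x).1 h2 he
      simp only [hgdef]
      linarith
    have hgsurj : ∀ y ∈ Set.Ioo (0:ℝ) 1, ∃ x, g x = y := by
      intro y hy
      obtain ⟨p, hp, hWp⟩ := aux_exists_value hk hW hM hC hP he
        (t := 1 - y) ⟨by linarith [hy.2], by linarith [hy.1]⟩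
      have htm : W 1 p ∈ Set.Ioo (0:ℝ) 1 :=
        ⟨aux_csf_pos hW hM hp one_pos, aux_csf_lt_one hW hM hp one_pos⟩
      refine ⟨Real.log ((1 - W 1 p) / W 1 p), ?_⟩
      have hlf := auxlf_log htm
      simp only [hgdef, hlf]
      have heq := aux_comono_eq hCo (hpick _ htm).1 hp (hpick _ htm).2 he
      rw [heq, hWp]
      ring
    set h : ℝ → ℝ := fun x => Real.log (g x / (1 - g x)) with hhdef
    have hhmono : StrictMono h := by
      intro x y hxy
      have h1 := hgmono hxy
      have hx := hg01 x
      have hy' := hg01 y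
      have hq : g x / (1 - g x) < g y / (1 - g y) := by
        rw [div_lt_div_iff₀ (by linarith [hx.2]) (by linarith [hy'.2])]
        nlinarith
      exact Real.log_lt_log (div_pos hx.1 (by linarith [hx.2])) hq
    have hhsurj : Function.Surjective h := by
      intro z
      have hyz := auxlf_mem (-z)
      obtain ⟨x, hx⟩ := hgsurj _ hyz
      refine ⟨x, ?_⟩
      simp only [hhdef]
      rw [hx, auxlf]
      have hE0 : (0:ℝ) < Real.exp (-z) := Real.exp_pos _
      have hratio : (1 / (1 + Real.exp (-z))) / (1 - 1 / (1 + Real.exp (-z)))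
          = Real.exp z := by
        rw [Real.exp_neg]
        have hr := Real.exp_pos z
        field_simp
        ring
      rw [hratio, Real.log_exp]
    have hhcont : Continuous h := hhmono.monotone.continuous_of_surjective hhsurj
    have hgeq : ∀ x, g x = 1 / (1 + Real.exp (-(h x))) := by
      intro x
      have hx := hg01 x
      have hpos : 0 < g x / (1 - g x) := div_pos hx.1 (by linarith [hx.2])
      simp only [hhdef]
      rw [Real.exp_neg, Real.exp_log hpos]
      rw [eq_div_iff]
      · have hgx0 : g x ≠ 0 := ne_of_gt hx.1
        field_simp
        ring
      · have : (0:ℝ) < (g x / (1 - g x))⁻¹ := inv_pos.mpr hpos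
        positivity
    have hgcont : Continuous g := by
      have hc2 : Continuous fun x => 1 / (1 + Real.exp (-(h x))) := by
        refine Continuous.div continuous_const
          (continuous_const.add (Real.continuous_exp.comp hhcont.neg)) ?_
        intro x
        have := Real.exp_pos (-(h x))
        positivity
      have : g = fun x => 1 / (1 + Real.exp (-(h x))) := funext hgeq
      rw [this]
      exact hc2
    have hhtop : Filter.Tendsto h Filter.atTop Filter.atTop :=
      hhmono.monotone.tendsto_atTop_atTop fun b => ⟨(hhsurj b).choose,
        ((hhsurj b).choose_spec).ge⟩
    have hhbot : Filter.Tendsto h Filter.atBot Filter.atBot :=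
      hhmono.monotone.tendsto_atBot_atBot fun b => ⟨(hhsurj b).choose,
        ((hhsurj b).choose_spec).le⟩
    have hlogbot : Filter.Tendsto (fun z : ℝ => 1 / (1 + Real.exp (-z)))
        Filter.atBot (nhds 0) := by
      have h1 : Filter.Tendsto (fun z : ℝ => 1 + Real.exp (-z)) Filter.atBot
          Filter.atTop := by
        refine Filter.tendsto_atTop_add_const_left _ 1 ?_
        exact Real.tendsto_exp_atTop.comp tendsto_neg_atBot_atTop
      have := h1.inv_tendsto_atTop; simp only [one_div]; exact this
    have hlogtop : Filter.Tendsto (fun z : ℝ => 1 / (1 + Real.exp (-z)))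
        Filter.atTop (nhds 1) := by
      have h1 : Filter.Tendsto (fun z : ℝ => Real.exp (-z)) Filter.atTop (nhds 0) :=
        Real.tendsto_exp_atBot.comp tendsto_neg_atTop_atBot
      have h2 : Filter.Tendsto (fun z : ℝ => 1 + Real.exp (-z)) Filter.atTop
          (nhds 1) := by
        simpa using tendsto_const_nhds.add h1
      have h3 : Filter.Tendsto (fun z : ℝ => 1 / (1 + Real.exp (-z))) Filter.atTop
          (nhds (1/1)) := (tendsto_const_nhds (x := (1:ℝ))).div h2 (by norm_num)
      simpa using h3
    refine ⟨hgcont, hgmono, ?_, ?_⟩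
    · exact (hlogbot.comp hhbot).congr fun x => (hgeq x).symm
    · exact (hlogtop.comp hhtop).congr fun x => (hgeq x).symm
  · -- conditions in the effort variable `e`, for fixed `x`
    intro x
    have hm := (hpick _ (auxlf_mem x)).1
    refine ⟨continuousOn_const.sub (hE _ hm), ?_, ?_⟩
    · intro a ha b hb hab
      have := (hM _ hm).1 ha hb hab
      simp only at this ⊢
      linarith
    · simpa using ((hM _ hm).2).const_sub 1
  · -- the representation property
    intro p hp
    have htm : W 1 p ∈ Set.Ioo (0:ℝ) 1 :=
      ⟨aux_csf_pos hW hM hp one_pos, aux_csf_lt_one hW hM hp one_pos⟩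
    have hlf := auxlf_log htm
    have heqW : ∀ u ∈ Set.Ioi (0:ℝ),
        W u p = 1 - (1 - W u (pick (auxlf (Real.log ((1 - W 1 p) / W 1 p))))) := by
      intro u hu
      rw [hlf]
      have heq := aux_comono_eq hCo hp (hpick _ htm).1 ((hpick _ htm).2.symm)
        (Set.mem_Ioi.mp hu)
      rw [← heq]
      ring
    refine ⟨Real.log ((1 - W 1 p) / W 1 p), ?_, fun e he => heqW e he⟩
    rw [aux_int_congr hp.1 fun u hu => (heqW u hu).symm]
    exact (hW p hp).2.2

/-- a CSF is a Random Performance Function if and only if it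
satisfies e-Continuity, p-Continuity, Monotonicity, Competitiveness, and
Co-monotonicity (Theorem 1). -/
theorem rpf_characterization (k : ℝ) (hk : k ∈ Set.Ioo (0:ℝ) 1)
    (W : ℝ → MeasureTheory.Measure ℝ → ℝ) (hW : IsCSF k W) :
    IsRPF k W ↔
      EContinuous k W ∧ PContinuousCSF k W ∧ CSFMonotone k W ∧
      CSFCompetitive k W ∧ CoMonotone k W := by
  constructor
  · exact fun h => aux_forward hk hW h
  · rintro ⟨h1, h2, h3, h4, h5⟩
    exact aux_backward hk hW h1 h2 h3 h4 h5
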